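/- (Parseval's relation for the Mellin transform) Let f, g : ℝ → ℂ be Schwartz functions and c ∈ (0,2). Then ∫₀^∞ ω·f(ω)·g(ω) dω = (1/(2π)) ∫_ℝ M(f)(2−c−iλ)·M(g)(c+iλ) dλ, where M(h)(s) = ∫₀^∞ h(ω) ω^{s−1} dω, and all integrals converge absolutely. -/

import Mathlib

open MeasureTheory Complex Set Real SchwartzMap
open scoped FourierTransform Real

namespace MellinParsevalAux

/-- The function `u ↦ exp (-a u) • h (exp (-u))`. -/
noncomputable def expSm (a : ℝ) (h : ℝ → ℂ) : ℝ → ℂ :=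
  fun u => Real.exp (-a * u) • h (Real.exp (-u))

lemma expSm_apply (a : ℝ) (h : ℝ → ℂ) (u : ℝ) :
    expSm a h u = Real.exp (-a * u) • h (Real.exp (-u)) := rfl

lemma continuous_expSm (a : ℝ) (h : ℝ → ℂ) (hh : Continuous h) : Continuous (expSm a h) :=
  (Real.continuous_exp.comp (continuous_const.mul continuous_id)).smul
    (hh.comp (Real.continuous_exp.comp continuous_neg))

lemma contDiff_expSm (a : ℝ) (h : SchwartzMap ℝ ℂ) : ContDiff ℝ 2 (expSm a ⇑h) :=
  (Real.contDiff_exp.comp (contDiff_const.mul contDiff_id)).smul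
    ((h.smooth 2).comp (Real.contDiff_exp.comp contDiff_neg))

lemma integrable_exp_neg_mul_abs {b : ℝ} (hb : 0 < b) :
    Integrable (fun u : ℝ => Real.exp (-b * |u|)) := by
  have hIoi : IntegrableOn (fun u : ℝ => Real.exp (-b * |u|)) (Ioi 0) := by
    apply (exp_neg_integrableOn_Ioi 0 hb).congr_fun (fun x hx => ?_) measurableSet_Ioi
    rw [abs_of_pos hx]
  have hIic : IntegrableOn (fun u : ℝ => Real.exp (-b * |u|)) (Iic 0) := by
    rw [← Measure.map_neg_eq_self (volume : Measure ℝ)]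
    have m : MeasurableEmbedding fun x : ℝ => -x := (Homeomorph.neg ℝ).measurableEmbedding
    rw [m.integrableOn_map_iff]
    simp_rw [Function.comp_def, abs_neg, neg_preimage, neg_Iic, neg_zero]
    exact (integrableOn_Ici_iff_integrableOn_Ioi).mpr hIoi
  rw [← integrableOn_univ, ← Iic_union_Ioi (a := (0:ℝ))]
  exact hIic.union hIoi

lemma expSm_decay (h : SchwartzMap ℝ ℂ) {a : ℝ} (ha : 0 < a) :
    ∃ C b : ℝ, 0 < b ∧ ∀ u : ℝ, ‖expSm a ⇑h u‖ ≤ C * Real.exp (-b * |u|) := by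
  obtain ⟨C₀, hC₀pos, hC₀⟩ := h.decay 0 0
  obtain ⟨C₁, hC₁pos, hC₁⟩ := h.decay (⌈a⌉₊ + 1) 0
  set k : ℕ := ⌈a⌉₊ + 1 with hkdef
  have hk : a + 1 ≤ (k : ℝ) := by
    have := Nat.le_ceil a
    push_cast [hkdef]
    linarith
  refine ⟨max C₀ C₁, min a 1, lt_min ha one_pos, fun u => ?_⟩
  have hb1 : min a 1 ≤ a := min_le_left _ _
  have hb2 : min a 1 ≤ 1 := min_le_right _ _
  have hnorm : ‖expSm a ⇑h u‖ = Real.exp (-a * u) * ‖h (Real.exp (-u))‖ := by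
    rw [expSm_apply, norm_smul, Real.norm_eq_abs, abs_of_pos (Real.exp_pos _)]
  rcases le_or_gt 0 u with hu | hu
  · have h1 : ‖h (Real.exp (-u))‖ ≤ C₀ := by
      simpa using hC₀ (Real.exp (-u))
    have h2 : Real.exp (-a * u) ≤ Real.exp (-(min a 1) * |u|) := by
      rw [_root_.abs_of_nonneg hu]
      apply Real.exp_le_exp.mpr
      nlinarith
    calc ‖expSm a ⇑h u‖ = Real.exp (-a * u) * ‖h (Real.exp (-u))‖ := hnorm
      _ ≤ Real.exp (-(min a 1) * |u|) * C₀ :=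
          mul_le_mul h2 h1 (norm_nonneg _) (Real.exp_pos _).le
      _ ≤ max C₀ C₁ * Real.exp (-(min a 1) * |u|) := by
          rw [mul_comm]
          gcongr
          exact le_max_left _ _
  · have hx : (0:ℝ) < Real.exp (-u) := Real.exp_pos _
    have h1 : Real.exp (-(k:ℝ) * u) * ‖h (Real.exp (-u))‖ ≤ C₁ := by
      have := hC₁ (Real.exp (-u))
      rw [Real.norm_eq_abs, abs_of_pos hx] at this
      simpa [← Real.exp_nat_mul, mul_comm, mul_neg, neg_mul] using this
    have h2 : ‖h (Real.exp (-u))‖ ≤ C₁ * Real.exp ((k:ℝ) * u) := by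
      have e1 : Real.exp (-(k:ℝ) * u) * Real.exp ((k:ℝ) * u) = 1 := by
        rw [← Real.exp_add]
        norm_num
      nlinarith [mul_le_mul_of_nonneg_right h1 (Real.exp_pos ((k:ℝ) * u)).le,
        norm_nonneg (h (Real.exp (-u))), Real.exp_pos ((k:ℝ) * u)]
    calc ‖expSm a ⇑h u‖ = Real.exp (-a * u) * ‖h (Real.exp (-u))‖ := hnorm
      _ ≤ Real.exp (-a * u) * (C₁ * Real.exp ((k:ℝ) * u)) := by
          apply mul_le_mul_of_nonneg_left h2 (Real.exp_pos _).le
      _ = C₁ * Real.exp (((k:ℝ) - a) * u) := by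
          rw [mul_left_comm, ← Real.exp_add]
          congr 2
          ring
      _ ≤ C₁ * Real.exp (-(min a 1) * |u|) := by
          apply mul_le_mul_of_nonneg_left _ hC₁pos.le
          apply Real.exp_le_exp.mpr
          rw [_root_.abs_of_neg hu]
          nlinarith [mul_nonneg (by linarith : (0:ℝ) ≤ (k:ℝ) - a - min a 1)
            (neg_nonneg.mpr hu.le)]
      _ ≤ max C₀ C₁ * Real.exp (-(min a 1) * |u|) := by
          gcongr
          exact le_max_right _ _

lemma integrable_expSm (h : SchwartzMap ℝ ℂ) {a : ℝ} (ha : 0 < a) :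
    Integrable (expSm a ⇑h) := by
  obtain ⟨C, b, hb, hC⟩ := expSm_decay h ha
  exact Integrable.mono' ((integrable_exp_neg_mul_abs hb).const_mul C)
    (continuous_expSm a _ h.continuous).aestronglyMeasurable (ae_of_all _ hC)

lemma hasDerivAt_schwartz (h : SchwartzMap ℝ ℂ) (x : ℝ) :
    HasDerivAt (⇑h) (derivCLM ℝ ℂ h x) x := by
  rw [derivCLM_apply]
  exact (((h.smooth 1).differentiable (by norm_num)) x).hasDerivAt

lemma expSm_hasDerivAt (a : ℝ) (h h' : ℝ → ℂ) (hh : ∀ x, HasDerivAt h (h' x) x) (u : ℝ) :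
    HasDerivAt (expSm a h) ((-a) • expSm a h u - expSm (a + 1) h' u) u := by
  have h1 : HasDerivAt (fun u : ℝ => Real.exp (-a * u)) (-a * Real.exp (-a * u)) u := by
    have H := ((hasDerivAt_id u).const_mul (-a)).exp
    simpa [mul_comm] using H
  have hinner : HasDerivAt (fun u : ℝ => Real.exp (-u)) (-Real.exp (-u)) u := by
    simpa using (hasDerivAt_neg u).exp
  have h2 : HasDerivAt (fun u : ℝ => h (Real.exp (-u)))
      ((-Real.exp (-u)) • h' (Real.exp (-u))) u :=
    HasDerivAt.scomp u (hh (Real.exp (-u))) hinner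
  have := h1.smul h2
  convert this using 1
  case e'_4 => rfl
  case e'_8 => rfl
  have e2 : -(Real.exp (-(a + 1) * u)) = Real.exp (-a * u) * -Real.exp (-u) := by
    rw [mul_neg, ← Real.exp_add]
    congr 2
    ring
  simp only [expSm_apply, smul_smul, sub_eq_add_neg, ← neg_smul, e2]
  rw [add_comm]

set_option maxHeartbeats 1000000 in
lemma integrable_fourierIntegral_expSm (h : SchwartzMap ℝ ℂ) {a : ℝ} (ha : 0 < a) :
    Integrable (𝓕 (expSm a ⇑h)) := by
  set h1 : SchwartzMap ℝ ℂ := derivCLM ℝ ℂ h with hh1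
  set h2 : SchwartzMap ℝ ℂ := derivCLM ℝ ℂ h1 with hh2
  have hd1 : deriv (expSm a ⇑h) = fun u => (-a) • expSm a ⇑h u - expSm (a + 1) ⇑h1 u :=
    funext fun u => (expSm_hasDerivAt a ⇑h ⇑h1 (hasDerivAt_schwartz h) u).deriv
  have i0 : Integrable (expSm a ⇑h) := integrable_expSm h ha
  have i1 : Integrable (deriv (expSm a ⇑h)) := by
    rw [hd1]
    exact ((integrable_expSm h ha).smul (-a)).sub (integrable_expSm h1 (by linarith))
  have hD1 : ∀ u : ℝ, HasDerivAt (fun u => (-a) • expSm a ⇑h u - expSm (a + 1) ⇑h1 u)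
      ((-a) • ((-a) • expSm a ⇑h u - expSm (a + 1) ⇑h1 u) -
        ((-(a + 1)) • expSm (a + 1) ⇑h1 u - expSm (a + 1 + 1) ⇑h2 u)) u := fun u =>
    ((expSm_hasDerivAt a ⇑h ⇑h1 (hasDerivAt_schwartz h) u).const_smul (-a)).sub
      (expSm_hasDerivAt (a + 1) ⇑h1 ⇑h2 (hasDerivAt_schwartz h1) u)
  have hd2 : deriv (deriv (expSm a ⇑h)) = fun u =>
      (-a) • ((-a) • expSm a ⇑h u - expSm (a + 1) ⇑h1 u) -
        ((-(a + 1)) • expSm (a + 1) ⇑h1 u - expSm (a + 1 + 1) ⇑h2 u) := by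
    rw [hd1]
    exact funext fun u => (hD1 u).deriv
  have i2 : Integrable (deriv (deriv (expSm a ⇑h))) := by
    rw [hd2]
    exact ((((integrable_expSm h ha).smul (-a)).sub
        (integrable_expSm h1 (by linarith))).smul (-a)).sub
      (((integrable_expSm h1 (by linarith)).smul (-(a+1))).sub
        (integrable_expSm h2 (by linarith)))
  have hIter : ∀ n : ℕ, (n : ℕ∞) ≤ 2 → Integrable (iteratedDeriv n (expSm a ⇑h)) := by
    intro n hn
    have hn' : n ≤ 2 := by exact_mod_cast hn
    interval_cases n
    · simpa [iteratedDeriv_zero] using i0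
    · simpa [iteratedDeriv_one] using i1
    · rw [show (2 : ℕ) = 1 + 1 from rfl, iteratedDeriv_succ, iteratedDeriv_one]
      exact i2
  have key := Real.fourier_iteratedDeriv (N := 2) (n := 2)
    (contDiff_expSm a h) hIter le_rfl
  set Gf := expSm a ⇑h
  have cont : Continuous (𝓕 Gf) :=
    VectorFourier.fourierIntegral_continuous Real.continuous_fourierChar
      (by exact continuous_inner) i0
  set M₀ : ℝ := ∫ u, ‖Gf u‖ with hM₀def
  set M₂ : ℝ := ∫ u, ‖iteratedDeriv 2 Gf u‖ with hM₂def
  have hM₀nn : 0 ≤ M₀ := integral_nonneg fun u => norm_nonneg _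
  have hM₂nn : 0 ≤ M₂ := integral_nonneg fun u => norm_nonneg _
  have hpt : ∀ ξ : ℝ, ‖𝓕 Gf ξ‖ ≤ (M₀ + M₂) * (1 + ξ ^ 2)⁻¹ := by
    intro ξ
    clear hd1 hd2 hD1 hIter i1 i2 hh1 hh2
    have hb0 : ‖𝓕 Gf ξ‖ ≤ M₀ :=
      VectorFourier.norm_fourierIntegral_le_integral_norm _ _ _ _ _
    have hb2' : ‖𝓕 (iteratedDeriv 2 Gf) ξ‖ ≤ M₂ :=
      VectorFourier.norm_fourierIntegral_le_integral_norm _ _ _ _ _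
    have hkey : ‖𝓕 (iteratedDeriv 2 Gf) ξ‖ = (2 * π) ^ 2 * ξ ^ 2 * ‖𝓕 Gf ξ‖ := by
      rw [congrFun key ξ, norm_smul]
      congr 1
      rw [norm_pow]
      have hn : ‖2 * (π : ℂ) * Complex.I * (ξ : ℂ)‖ = 2 * π * |ξ| := by
        norm_num [norm_mul, Complex.norm_real, Complex.norm_I, Real.norm_eq_abs,
          _root_.abs_of_pos Real.pi_pos]
      rw [hn, mul_pow, _root_.sq_abs]
    have hπ1 : (1 : ℝ) ≤ (2 * π) ^ 2 := by nlinarith [Real.pi_gt_three]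
    have hb2 : ξ ^ 2 * ‖𝓕 Gf ξ‖ ≤ M₂ := by
      have h₁ := hb2'
      rw [hkey] at h₁
      have hx : 0 ≤ ξ ^ 2 * ‖𝓕 Gf ξ‖ := mul_nonneg (sq_nonneg _) (norm_nonneg _)
      nlinarith [mul_le_mul_of_nonneg_right hπ1 hx]
    have hpos : (0 : ℝ) < 1 + ξ ^ 2 := by positivity
    have hsum : (1 + ξ ^ 2) * ‖𝓕 Gf ξ‖ ≤ M₀ + M₂ := by nlinarith [hb0, hb2]
    calc ‖𝓕 Gf ξ‖ = ((1 + ξ ^ 2) * ‖𝓕 Gf ξ‖) * (1 + ξ ^ 2)⁻¹ := by field_simp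
      _ ≤ (M₀ + M₂) * (1 + ξ ^ 2)⁻¹ := mul_le_mul_of_nonneg_right hsum (by positivity)
  exact Integrable.mono' ((integrable_inv_one_add_sq).const_mul (M₀ + M₂))
    cont.aestronglyMeasurable (ae_of_all _ hpt)

lemma schwartz_mellinConvergent (f : SchwartzMap ℝ ℂ) {s : ℂ} (hs : 0 < s.re) :
    MellinConvergent (⇑f) s := by
  refine mellinConvergent_of_isBigO_rpow (a := s.re + 1) (b := 0)
    (f.continuous.locallyIntegrable.locallyIntegrableOn _) ?_ (by linarith) ?_ hs
  · obtain ⟨C, hCpos, hC⟩ := f.decay ⌈s.re + 1⌉₊ 0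
    rw [Asymptotics.isBigO_iff]
    refine ⟨C, ?_⟩
    filter_upwards [Filter.eventually_ge_atTop (1 : ℝ)] with x hx
    have hx0 : (0 : ℝ) < x := lt_of_lt_of_le one_pos hx
    have h1 : ‖f x‖ * x ^ (⌈s.re + 1⌉₊ : ℕ) ≤ C := by
      have := hC x
      rw [Real.norm_eq_abs, _root_.abs_of_pos hx0] at this
      simpa [mul_comm] using this
    have h2 : ‖f x‖ ≤ C * x ^ (-((⌈s.re + 1⌉₊ : ℕ) : ℝ)) := by
      rw [Real.rpow_neg hx0.le, Real.rpow_natCast]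
      rw [← le_div_iff₀ (by positivity)] at h1
      rw [div_eq_mul_inv] at h1
      exact h1
    have h3 : x ^ (-(((⌈s.re + 1⌉₊ : ℕ)) : ℝ)) ≤ x ^ (-(s.re + 1)) :=
      Real.rpow_le_rpow_of_exponent_le hx (neg_le_neg (Nat.le_ceil _))
    calc ‖f x‖ ≤ C * x ^ (-(((⌈s.re + 1⌉₊ : ℕ)) : ℝ)) := h2
      _ ≤ C * x ^ (-(s.re + 1)) := mul_le_mul_of_nonneg_left h3 hCpos.le
      _ = C * ‖x ^ (-(s.re + 1))‖ := by
          rw [Real.norm_eq_abs, _root_.abs_of_pos (Real.rpow_pos_of_pos hx0 _)]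
  · have h0 : Filter.Tendsto (⇑f) (nhdsWithin 0 (Ioi 0)) (nhds (f 0)) :=
      (f.continuous.tendsto 0).mono_left nhdsWithin_le_nhds
    have heq : (fun x : ℝ => x ^ (-(0 : ℝ))) = fun _ : ℝ => (1 : ℝ) := by
      funext x
      rw [neg_zero, Real.rpow_zero]
    rw [heq]
    exact h0.isBigO_one ℝ

end MellinParsevalAux

open MellinParsevalAux
open scoped FourierTransform Real

set_option maxHeartbeats 1600000 in
/-- Parseval's relation for the Mellin transform: for Schwartz
functions `f, g` and `c ∈ (0,2)`,
`∫₀^∞ ω·f(ω)·g(ω) dω = (1/(2π)) ∫_ℝ M(f)(2−c−iλ)·M(g)(c+iλ) dλ`,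
all integrals converging absolutely. -/
theorem mellin_parseval_schwartz (f g : SchwartzMap ℝ ℂ) (c : ℝ) (hc0 : 0 < c)
    (hc2 : c < 2) :
    let M : (ℝ → ℂ) → ℂ → ℂ := fun h s => ∫ ω in Ioi (0 : ℝ), h ω * (ω : ℂ) ^ (s - 1)
    IntegrableOn (fun ω : ℝ => (ω : ℂ) * f ω * g ω) (Ioi 0) ∧
      (∀ l : ℝ, IntegrableOn
          (fun ω : ℝ => f ω * (ω : ℂ) ^ ((2 : ℂ) - c - (l : ℂ) * Complex.I - 1)) (Ioi 0)) ∧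
      (∀ l : ℝ, IntegrableOn
          (fun ω : ℝ => g ω * (ω : ℂ) ^ ((c : ℂ) + (l : ℂ) * Complex.I - 1)) (Ioi 0)) ∧
      Integrable
        (fun l : ℝ =>
          M f ((2 : ℂ) - c - (l : ℂ) * Complex.I) * M g ((c : ℂ) + (l : ℂ) * Complex.I)) ∧
      (∫ ω in Ioi (0 : ℝ), (ω : ℂ) * f ω * g ω) =
        ((1 / (2 * Real.pi) : ℝ) : ℂ) *
          ∫ l : ℝ,
            M f ((2 : ℂ) - c - (l : ℂ) * Complex.I) * M g ((c : ℂ) + (l : ℂ) * Complex.I) := by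
  intro M
  have h2c : (0 : ℝ) < 2 - c := by linarith
  -- the two weighted functions on the real line
  set F : ℝ → ℂ := expSm (2 - c) ⇑f with hFdef
  set G : ℝ → ℂ := expSm c ⇑g with hGdef
  have hM : ∀ (h : ℝ → ℂ) (s : ℂ), M h s = mellin h s := by
    intro h s
    rw [show M h s = ∫ ω in Ioi (0 : ℝ), h ω * (ω : ℂ) ^ (s - 1) from rfl,
      show mellin h s = ∫ t in Ioi (0 : ℝ), (t : ℂ) ^ (s - 1) • h t from rfl]
    simp_rw [smul_eq_mul, mul_comm]
  -- identification of the Mellin transforms with Fourier transforms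
  have hFeq : ∀ l : ℝ, M ⇑f ((2 : ℂ) - c - (l : ℂ) * Complex.I) = 𝓕 F (-(l / (2 * π))) := by
    intro l
    rw [hM, mellin_eq_fourier]
    rw [show ((2 : ℂ) - (c : ℂ) - (l : ℂ) * Complex.I).re = 2 - c by simp,
      show ((2 : ℂ) - (c : ℂ) - (l : ℂ) * Complex.I).im = -l by simp, neg_div]
    rfl
  have hGeq : ∀ l : ℝ, M ⇑g ((c : ℂ) + (l : ℂ) * Complex.I) = 𝓕 G (l / (2 * π)) := by
    intro l
    rw [hM, mellin_eq_fourier]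
    rw [show (((c : ℂ)) + (l : ℂ) * Complex.I).re = c by simp,
      show (((c : ℂ)) + (l : ℂ) * Complex.I).im = l by simp]
    rfl
  -- integrability facts
  have hF_int : Integrable F := integrable_expSm f h2c
  have hG_int : Integrable G := integrable_expSm g hc0
  have hFf_int : Integrable (𝓕 F) := integrable_fourierIntegral_expSm f h2c
  have hGf_int : Integrable (𝓕 G) := integrable_fourierIntegral_expSm g hc0
  have hFinv_int : Integrable (𝓕⁻ F) := by
    rw [show (𝓕⁻ F) = fun w => 𝓕 F (-w) from
      funext fun w => Real.fourierInv_eq_fourier_neg F w]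
    exact hFf_int.comp_neg
  have cF : Continuous (𝓕 F) :=
    VectorFourier.fourierIntegral_continuous Real.continuous_fourierChar
      (by exact continuous_inner) hF_int
  have hΨ_int : Integrable (fun t : ℝ => 𝓕 F (-t) * 𝓕 G t) := by
    refine Integrable.bdd_mul (c := ∫ u, ‖F u‖) hGf_int (cF.comp continuous_neg).aestronglyMeasurable ?_
    exact ae_of_all _ fun t =>
      VectorFourier.norm_fourierIntegral_le_integral_norm _ _ _ _ _
  have hπ : (2 * π) ≠ 0 := by positivity
  have hfunc : (fun l : ℝ => M ⇑f ((2 : ℂ) - c - (l : ℂ) * Complex.I) *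
      M ⇑g ((c : ℂ) + (l : ℂ) * Complex.I)) =
      fun l : ℝ => (fun t : ℝ => 𝓕 F (-t) * 𝓕 G t) ((2 * π)⁻¹ * l) := by
    funext l
    rw [hFeq l, hGeq l]
    simp only [div_eq_inv_mul]
  refine ⟨?_, ?_, ?_, ?_, ?_⟩
  · -- integrability of ω f g on (0,∞)
    have h2 : MellinConvergent (⇑f) 2 := schwartz_mellinConvergent f (by norm_num)
    have h2' : IntegrableOn (fun t : ℝ => (t : ℂ) * f t) (Ioi 0) := by
      refine h2.congr_fun (fun t _ => ?_) measurableSet_Ioi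
      norm_num [smul_eq_mul]
    obtain ⟨Cg, hCgpos, hCg⟩ := g.decay 0 0
    have := Integrable.bdd_mul h2' (g.continuous.aestronglyMeasurable) (c := Cg) (ae_of_all _ fun x => by
      simpa using hCg x)
    exact this.congr (ae_of_all _ fun ω => by ring)
  · intro l
    have hs : 0 < ((2 : ℂ) - c - (l : ℂ) * Complex.I).re := by simp; linarith
    exact (schwartz_mellinConvergent f hs).congr_fun
      (fun t _ => by dsimp only; rw [smul_eq_mul, mul_comm]) measurableSet_Ioi
  · intro l
    have hs : 0 < ((c : ℂ) + (l : ℂ) * Complex.I).re := by simpa using hc0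
    exact (schwartz_mellinConvergent g hs).congr_fun
      (fun t _ => by dsimp only; rw [smul_eq_mul, mul_comm]) measurableSet_Ioi
  · -- integrability of the product of Mellin transforms
    rw [hfunc]
    exact hΨ_int.comp_mul_left' (inv_ne_zero hπ)
  · -- the Parseval identity
    -- Step 1: rewrite the right-hand side
    rw [hfunc, MeasureTheory.Measure.integral_comp_mul_left
      (fun t : ℝ => 𝓕 F (-t) * 𝓕 G t) ((2 * π)⁻¹), inv_inv]
    rw [_root_.abs_of_pos (by positivity : (0:ℝ) < 2 * π)]
    rw [Complex.real_smul, ← mul_assoc, ← Complex.ofReal_mul,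
      show (1 / (2 * π)) * (2 * π) = 1 by field_simp, Complex.ofReal_one, one_mul]
    -- Step 2: the left-hand side as an integral of F * G
    have e1 : (∫ ω in Ioi (0 : ℝ), (ω : ℂ) * f ω * g ω) =
        mellin (fun ω : ℝ => f ω * g ω) 2 := by
      rw [show mellin (fun ω : ℝ => f ω * g ω) 2 =
        ∫ t in Ioi (0 : ℝ), (t : ℂ) ^ ((2 : ℂ) - 1) • (f t * g t) from rfl]
      refine setIntegral_congr_fun measurableSet_Ioi (fun t _ => ?_)
      norm_num [smul_eq_mul]
      ring
    have e2 := mellin_eq_fourier (fun ω : ℝ => f ω * g ω) (s := 2)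
    rw [show (2 : ℂ).re = 2 by simp, show (2 : ℂ).im = 0 by simp, zero_div] at e2
    have e3 : 𝓕 (fun u : ℝ => Real.exp (-2 * u) • (f (Real.exp (-u)) * g (Real.exp (-u)))) 0 =
        ∫ u : ℝ, Real.exp (-2 * u) • (f (Real.exp (-u)) * g (Real.exp (-u))) := by
      rw [Real.fourier_real_eq]
      simp
    have e4 : (fun u : ℝ => Real.exp (-2 * u) • (f (Real.exp (-u)) * g (Real.exp (-u)))) =
        fun u : ℝ => F u * G u := by
      funext u
      show _ = (Real.exp (-(2 - c) * u) • f (Real.exp (-u))) *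
        (Real.exp (-c * u) • g (Real.exp (-u)))
      have he : Real.exp (-(2 - c) * u) * Real.exp (-c * u) = Real.exp (-2 * u) := by
        rw [← Real.exp_add]
        congr 1
        ring
      simp only [Complex.real_smul]
      rw [← he]
      push_cast
      ring
    rw [e1, e2, e3, e4]
    -- Step 3: multiplication formula and Fourier inversion
    have hflip : (innerₗ ℝ).flip = innerₗ ℝ := by
      apply LinearMap.ext
      intro x
      apply LinearMap.ext
      intro y
      simp only [LinearMap.flip_apply]
      exact real_inner_comm x y
    have mult := VectorFourier.integral_fourierIntegral_smul_eq_flip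
      (L := innerₗ ℝ) Real.continuous_fourierChar continuous_inner hG_int hFinv_int
    rw [hflip] at mult
    have hinv : ∀ x, 𝓕 (𝓕⁻ F) x = F x := fun x =>
      hF_int.fourier_fourierInv_eq hFf_int
        ((continuous_expSm _ _ f.continuous).continuousAt)
    have mult' : ∫ ξ : ℝ, 𝓕 G ξ • 𝓕⁻ F ξ = ∫ x : ℝ, G x • 𝓕 (𝓕⁻ F) x := mult
    calc (∫ u : ℝ, F u * G u) = ∫ x : ℝ, G x • 𝓕 (𝓕⁻ F) x := by
          congr 1
          funext x
          rw [hinv x, smul_eq_mul, mul_comm]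
      _ = ∫ ξ : ℝ, 𝓕 G ξ • 𝓕⁻ F ξ := mult'.symm
      _ = ∫ t : ℝ, 𝓕 F (-t) * 𝓕 G t := by
          congr 1
          funext t
          rw [Real.fourierInv_eq_fourier_neg, smul_eq_mul, mul_comm]
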